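/- Let G be an n-vertex forest, let k be an integer with 2k ≥ n+2, and let H be a k-cover of G. If G has no ⌈n/k⌉-bounded H-coloring, then each of the following holds: (a) k = n and G is isomorphic to the star K_{1,n−1}; (b) H is plain and H(u,v) is a derangement for every edge uv of G; (c) for every vertex x and all y, z ∈ N(x), H(y,x) = H(z,x). -/

import Mathlib

/-- A DP-cover (correspondence cover) of a graph `G` with colors in `Γ`:
lists `L v`, and a symmetric adjacency relation between nodes `(v, γ)`
that projects to edges of `G` and is a partial matching between fibers. -/
structure DPCover {V : Type*} (G : SimpleGraph V) (Γ : Type*) where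
  L : V → Finset Γ
  Adj : V × Γ → V × Γ → Prop
  symm : ∀ p q, Adj p q → Adj q p
  adj_sub : ∀ u α w β, Adj (u, α) (w, β) → G.Adj u w ∧ α ∈ L u ∧ β ∈ L w
  matching : ∀ u α w β β', Adj (u, α) (w, β) → Adj (u, α) (w, β') → β = β'

/-- `H` is a `k`-cover: every list has size `k`. -/
def DPCover.IsKCover {V Γ : Type*} {G : SimpleGraph V} (H : DPCover G Γ) (k : ℕ) : Prop :=
  ∀ v, (H.L v).card = k

/-- An `H`-coloring: a choice from every list whose graph is independent in the cover. -/
def DPCover.IsColoring {V Γ : Type*} {G : SimpleGraph V} (H : DPCover G Γ) (f : V → Γ) : Prop :=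
  (∀ v, f v ∈ H.L v) ∧ ∀ u w, ¬ H.Adj (u, f u) (w, f w)

/-- The size of the color class of `γ` under `f`. -/
def classSize {V Γ : Type*} [Fintype V] [DecidableEq Γ] (f : V → Γ) (γ : Γ) : ℕ :=
  (Finset.univ.filter fun v => f v = γ).card

/-- Every color class has size at most `m`. -/
def IsBounded {V Γ : Type*} [Fintype V] [DecidableEq Γ] (m : ℕ) (f : V → Γ) : Prop :=
  ∀ γ, classSize f γ ≤ m

/-- `f` is `⌈n/k⌉`-bounded and at most `n % k` color classes have size `⌊n/k⌋ + 1`. -/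
def IsStronglyBounded {V Γ : Type*} [Fintype V] [DecidableEq Γ] (n k : ℕ) (f : V → Γ) : Prop :=
  IsBounded ((n + k - 1) / k) f ∧
  ((Finset.univ.image f).filter fun γ => classSize f γ = n / k + 1).card ≤ n % k

/-- `G` is equitably DP `k`-colorable: every `k`-cover admits a `⌈n/k⌉`-bounded coloring. -/
def EDPColorable {V : Type*} [Fintype V] (G : SimpleGraph V) (k : ℕ) : Prop :=
  ∀ H : DPCover G ℕ, H.IsKCover k →
    ∃ f, H.IsColoring f ∧ IsBounded ((Fintype.card V + k - 1) / k) f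

/-- `G` is strongly equitably DP `k`-colorable: every `k`-cover admits a strongly
`⌈n/k⌉`-bounded coloring. -/
def SEDPColorable {V : Type*} [Fintype V] (G : SimpleGraph V) (k : ℕ) : Prop :=
  ∀ H : DPCover G ℕ, H.IsKCover k →
    ∃ f, H.IsColoring f ∧ IsStronglyBounded (Fintype.card V) k f

/-- The star `K_{1,n-1}` on `n` vertices: center `0` adjacent to all other
vertices, and no other edges. -/
def starGraph (n : ℕ) : SimpleGraph (Fin n) :=
  SimpleGraph.fromRel (fun a _ => a.val = 0)

/-- `H(u,v)` is a derangement: `L u ⊆ L v`, each `α ∈ L u` is matched to some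
node of the fiber of `v`, and never to `α` itself. -/
def DPCover.IsDerangement {V : Type*} {G : SimpleGraph V} (H : DPCover G ℕ) (u v : V) : Prop :=
  H.L u ⊆ H.L v ∧ ∀ α ∈ H.L u, ∃ β, H.Adj (u, α) (v, β) ∧ β ≠ α

/-- `H` is plain: all lists are the same `k`-set `Γ₀`. -/
def DPCover.IsPlain {V : Type*} {G : SimpleGraph V} (H : DPCover G ℕ) (k : ℕ) : Prop :=
  ∃ Γ₀ : Finset ℕ, Γ₀.card = k ∧ ∀ v, H.L v = Γ₀

open scoped Classical

noncomputable def degIn {V : Type*} [DecidableEq V] (G : SimpleGraph V) (T : Finset V) (v : V) : ℕ :=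
  (T.filter (fun u => G.Adj u v)).card

section Infra

variable {V : Type*} [Fintype V] [DecidableEq V] {G : SimpleGraph V}

lemma exists_leaf (hG : G.IsAcyclic) (T : Finset V) (hT : T.Nonempty) :
    ∃ v ∈ T, degIn G T v ≤ 1 := by
  classical
  set P : ℕ → Prop := fun L => ∃ (u v : V) (p : G.Walk u v), p.IsPath ∧
    (∀ x ∈ p.support, x ∈ T) ∧ p.length = L with hP
  obtain ⟨v0, hv0⟩ := hT
  have hP0 : P 0 := ⟨v0, v0, SimpleGraph.Walk.nil, by simp, by simpa using hv0, rfl⟩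
  set N := Fintype.card V with hN
  have hPbound : ∀ L, P L → L < N := by
    rintro L ⟨u, v, p, hp, -, rfl⟩
    exact hp.length_lt
  set M := Nat.findGreatest P N with hM
  have hPM : P M := Nat.findGreatest_spec (Nat.zero_le N) hP0
  obtain ⟨u, v, p, hp, hsupp, hlen⟩ := hPM
  refine ⟨u, hsupp _ p.start_mem_support, ?_⟩
  have key : ∀ a ∈ T, G.Adj a u → p.support.tail.head? = some a := by
    intro a haT hadj
    have hane : a ≠ u := hadj.ne
    by_cases hmem : a ∈ p.support
    · have hq : (p.takeUntil a hmem).IsPath := hp.takeUntil hmem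
      have he : (SimpleGraph.Walk.cons hadj.symm SimpleGraph.Walk.nil : G.Walk u a).IsPath := by
        rw [SimpleGraph.Walk.cons_isPath_iff]
        exact ⟨SimpleGraph.Walk.IsPath.nil, by simp [hane.symm]⟩
      have := hG.path_unique ⟨p.takeUntil a hmem, hq⟩ ⟨_, he⟩
      have hqe : p.takeUntil a hmem = SimpleGraph.Walk.cons hadj.symm SimpleGraph.Walk.nil :=
        congrArg Subtype.val this
      have hsupp2 : p.support = ((p.takeUntil a hmem).append (p.dropUntil a hmem)).support := by
        rw [p.take_spec hmem]
      rw [SimpleGraph.Walk.support_append, hqe] at hsupp2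
      simp only [SimpleGraph.Walk.support_cons, SimpleGraph.Walk.support_nil] at hsupp2
      rw [hsupp2]
      rfl
    · exfalso
      have hext : P (M + 1) := by
        refine ⟨a, v, SimpleGraph.Walk.cons hadj p, hp.cons hmem, ?_, by simp [hlen]⟩
        intro x hx
        rw [SimpleGraph.Walk.support_cons] at hx
        rcases List.mem_cons.mp hx with h | h
        · exact h ▸ haT
        · exact hsupp _ h
      have hlt : M + 1 ≤ N := Nat.le_of_lt (hPbound _ hext)
      exact Nat.findGreatest_is_greatest (by omega) hlt hext
  rw [degIn, Finset.card_le_one]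
  intro a ha b hb
  simp only [Finset.mem_filter] at ha hb
  have h1 := key a ha.1 ha.2
  have h2 := key b hb.1 hb.2
  rw [h1] at h2
  exact Option.some_injective _ h2

lemma forest_bound (hG : G.IsAcyclic) (T : Finset V) (hT : T.Nonempty) :
    (∑ v ∈ T, degIn G T v) + 2 ≤ 2 * T.card := by
  classical
  have H : ∀ (n : ℕ) (T : Finset V), T.card = n → T.Nonempty →
      (∑ v ∈ T, degIn G T v) + 2 ≤ 2 * T.card := by
    intro n
    induction n using Nat.strong_induction_on with
    | _ n ih =>
      intro T hn hT
      obtain ⟨v, hvT, hv⟩ := exists_leaf hG T hT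
      set T' := T.erase v with hT'
      by_cases hT'e : T' = ∅
      · have hsing : T = {v} := by
          apply Finset.eq_singleton_iff_unique_mem.mpr
          refine ⟨hvT, fun x hx => ?_⟩
          by_contra hne
          exact (Finset.notMem_empty x) (hT'e ▸ Finset.mem_erase.mpr ⟨hne, hx⟩)
        subst hsing
        simp only [degIn, Finset.sum_singleton, Finset.card_singleton]
        rw [Finset.filter_singleton]
        simp [SimpleGraph.irrefl]
      · have hT'ne : T'.Nonempty := Finset.nonempty_of_ne_empty hT'e
        have hcard' : T'.card < n := hn ▸ Finset.card_erase_lt_of_mem hvT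
        have hins : T = insert v T' := by rw [hT', Finset.insert_erase hvT]
        have hvnotT' : v ∉ T' := Finset.notMem_erase v T
        have hdeg : ∀ x, degIn G T x ≤ degIn G T' x + (if G.Adj v x then 1 else 0) := by
          intro x
          rw [degIn, degIn, hins, Finset.filter_insert]
          split_ifs with h
          · rw [Finset.card_insert_of_notMem (by simp [hvnotT'])]
          · omega
        have hdv' : degIn G T' v ≤ 1 := by
          refine le_trans (Finset.card_le_card ?_) hv
          rw [hT']
          intro x hx
          simp only [Finset.mem_filter, Finset.mem_erase] at hx ⊢
          exact ⟨hx.1.2, hx.2⟩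
        have hboole : ∑ x ∈ T', (if G.Adj v x then 1 else 0) = degIn G T' v := by
          rw [Finset.sum_boole, degIn]
          norm_cast
          congr 1
          apply Finset.filter_congr
          intro x _
          simp [G.adj_comm]
        have h2 : ∑ x ∈ T', degIn G T x ≤ (∑ x ∈ T', degIn G T' x) + 1 := by
          calc ∑ x ∈ T', degIn G T x
              ≤ ∑ x ∈ T', (degIn G T' x + if G.Adj v x then 1 else 0) :=
                Finset.sum_le_sum (fun x _ => hdeg x)
            _ = (∑ x ∈ T', degIn G T' x) + ∑ x ∈ T', (if G.Adj v x then 1 else 0) :=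
                Finset.sum_add_distrib
            _ ≤ (∑ x ∈ T', degIn G T' x) + 1 := by rw [hboole]; omega
        have hIH := ih _ hcard' T' rfl hT'ne
        have hsum : ∑ x ∈ T, degIn G T x = degIn G T v + ∑ x ∈ T', degIn G T x := by
          rw [hins, Finset.sum_insert hvnotT']
        have hcards : T.card = T'.card + 1 := by
          rw [hins, Finset.card_insert_of_notMem hvnotT']
        omega
  exact H _ T rfl hT

lemma peel (hG : G.IsAcyclic) {S T : Finset V} (hS : S ⊆ T) (hne : (T \ S).Nonempty)
    (hcon : 2 * S.card ≤ 2 + ∑ s ∈ S, degIn G S s) :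
    ∃ v ∈ T \ S, degIn G T v ≤ 1 := by
  classical
  by_contra hcontra
  push_neg at hcontra
  have hv2 : ∀ v ∈ T \ S, 2 ≤ degIn G T v := fun v hv => hcontra v hv
  have hTne : T.Nonempty := by
    obtain ⟨v, hv⟩ := hne
    exact ⟨v, (Finset.mem_sdiff.mp hv).1⟩
  have hFB := forest_bound hG T hTne
  have hsplit : ∑ v ∈ T, degIn G T v
      = (∑ s ∈ S, degIn G T s) + ∑ v ∈ T \ S, degIn G T v := by
    rw [← Finset.sum_union (Finset.disjoint_sdiff)]
    congr 1
    rw [Finset.union_sdiff_of_subset hS]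
  have hmono : ∀ s ∈ S, degIn G S s ≤ degIn G T s := by
    intro s _
    exact Finset.card_le_card (Finset.filter_subset_filter _ hS)
  have hA : ∑ s ∈ S, degIn G S s ≤ ∑ s ∈ S, degIn G T s := Finset.sum_le_sum hmono
  have hB : 2 * (T \ S).card ≤ ∑ v ∈ T \ S, degIn G T v := by
    calc 2 * (T \ S).card = ∑ _v ∈ T \ S, 2 := by rw [Finset.sum_const]; ring
    _ ≤ _ := Finset.sum_le_sum hv2
  have hcards : S.card + (T \ S).card = T.card := by
    rw [Finset.card_sdiff_of_subset hS]
    have := Finset.card_le_card hS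
    omega
  -- all inequalities are equalities
  have hAeq : ∑ s ∈ S, degIn G S s = ∑ s ∈ S, degIn G T s := by omega
  have hBeq : ∑ v ∈ T \ S, degIn G T v = 2 * (T \ S).card := by omega
  have hptS : ∀ s ∈ S, degIn G S s = degIn G T s :=
    (Finset.sum_eq_sum_iff_of_le hmono).mp hAeq
  have hptU : ∀ v ∈ T \ S, degIn G T v = 2 := by
    have h2' : ∀ v ∈ T \ S, (fun _ => 2) v ≤ degIn G T v := hv2
    have := (Finset.sum_eq_sum_iff_of_le h2').mp ?_
    · intro v hv; exact (this v hv).symm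
    · rw [hBeq, Finset.sum_const]; ring
  -- no edges between S and T \ S
  have hnoedge : ∀ v ∈ T \ S, ∀ s ∈ S, ¬ G.Adj s v := by
    intro v hv s hs hadj
    have hvT : v ∈ T := (Finset.mem_sdiff.mp hv).1
    have hvS : v ∉ S := (Finset.mem_sdiff.mp hv).2
    have : degIn G S s + 1 ≤ degIn G T s := by
      rw [degIn, degIn]
      have hsub : insert v (S.filter (fun u => G.Adj u s)) ⊆ T.filter (fun u => G.Adj u s) := by
        intro x hx
        rcases Finset.mem_insert.mp hx with rfl | hx
        · exact Finset.mem_filter.mpr ⟨hvT, hadj.symm⟩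
        · have := Finset.mem_filter.mp hx
          exact Finset.mem_filter.mpr ⟨hS this.1, this.2⟩
      have := Finset.card_le_card hsub
      rw [Finset.card_insert_of_notMem (by simp [hvS])] at this
      omega
    have := hptS s hs
    omega
  -- then T \ S is a forest with min degree 2: contradiction
  have hUdeg : ∀ v ∈ T \ S, degIn G (T \ S) v = 2 := by
    intro v hv
    have h1 : T.filter (fun u => G.Adj u v) ⊆ T \ S := by
      intro x hx
      have hx' := Finset.mem_filter.mp hx
      refine Finset.mem_sdiff.mpr ⟨hx'.1, fun hxS => ?_⟩
      exact hnoedge v hv x hxS hx'.2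
    have h2 : (T \ S).filter (fun u => G.Adj u v) = T.filter (fun u => G.Adj u v) := by
      apply Finset.Subset.antisymm
      · exact Finset.filter_subset_filter _ (Finset.sdiff_subset)
      · intro x hx
        exact Finset.mem_filter.mpr ⟨h1 hx, (Finset.mem_filter.mp hx).2⟩
    rw [degIn, h2, ← degIn, hptU v hv]
  have hFBU := forest_bound hG (T \ S) hne
  have : ∑ v ∈ T \ S, degIn G (T \ S) v = 2 * (T \ S).card := by
    rw [Finset.sum_congr rfl hUdeg, Finset.sum_const]; ring
  omega

/-- a good partial coloring on `S`: colors from lists, injective, independent in `H`. -/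
def GoodCol (H : DPCover G ℕ) (S : Finset V) (g : V → ℕ) : Prop :=
  (∀ v ∈ S, g v ∈ H.L v) ∧
  (∀ u ∈ S, ∀ v ∈ S, u ≠ v → g u ≠ g v) ∧
  (∀ u ∈ S, ∀ v ∈ S, ¬ H.Adj (u, g u) (v, g v))

lemma exists_color {H : DPCover G ℕ} {k : ℕ} (hH : H.IsKCover k) {S : Finset V} (g : V → ℕ)
    (v : V) (X : Finset ℕ) (hbound : S.card + degIn G S v + X.card < k) :
    ∃ c ∈ H.L v, c ∉ S.image g ∧ c ∉ X ∧ ∀ u ∈ S, ¬ H.Adj (u, g u) (v, c) := by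
  classical
  set conf : Finset ℕ := (S.filter (fun u => G.Adj u v)).biUnion
    (fun u => (H.L v).filter (fun β => H.Adj (u, g u) (v, β))) with hconf
  set bad : Finset ℕ := S.image g ∪ X ∪ conf with hbad
  have hconfcard : conf.card ≤ degIn G S v := by
    refine le_trans (Finset.card_biUnion_le) ?_
    rw [degIn]
    calc ∑ u ∈ S.filter (fun u => G.Adj u v),
          ((H.L v).filter (fun β => H.Adj (u, g u) (v, β))).card
        ≤ ∑ _u ∈ S.filter (fun u => G.Adj u v), 1 := by
          refine Finset.sum_le_sum (fun u _ => ?_)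
          rw [Finset.card_le_one]
          intro a ha b hb
          exact H.matching u (g u) v a b (Finset.mem_filter.mp ha).2 (Finset.mem_filter.mp hb).2
      _ = (S.filter (fun u => G.Adj u v)).card := by rw [Finset.sum_const, smul_eq_mul, mul_one]
  have hbadcard : bad.card < k := by
    calc bad.card ≤ (S.image g).card + X.card + conf.card := by
          refine le_trans (Finset.card_union_le _ _) ?_
          have := Finset.card_union_le (S.image g) X
          omega
      _ ≤ S.card + X.card + degIn G S v := by
          have := Finset.card_image_le (s := S) (f := g)
          omega
      _ < k := by omega
  have hnsub : ¬ (H.L v ⊆ bad) := by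
    intro hsub
    have := Finset.card_le_card hsub
    rw [hH v] at this
    omega
  obtain ⟨c, hcL, hcbad⟩ := Finset.not_subset.mp hnsub
  refine ⟨c, hcL, ?_, ?_, ?_⟩
  · intro h; exact hcbad (by simp [hbad, h])
  · intro h; exact hcbad (by simp [hbad, h])
  · intro u huS hadj
    have hGadj : G.Adj u v := (H.adj_sub _ _ _ _ hadj).1
    apply hcbad
    have : c ∈ conf := Finset.mem_biUnion.mpr
      ⟨u, Finset.mem_filter.mpr ⟨huS, hGadj⟩, Finset.mem_filter.mpr ⟨hcL, hadj⟩⟩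
    simp [hbad, this]

lemma step_update {H : DPCover G ℕ} {S : Finset V} {g : V → ℕ} {v : V} {c : ℕ}
    (hGood : GoodCol H S g) (hvS : v ∉ S) (hcL : c ∈ H.L v) (hcim : c ∉ S.image g)
    (hcconf : ∀ u ∈ S, ¬ H.Adj (u, g u) (v, c)) :
    GoodCol H (insert v S) (Function.update g v c) := by
  obtain ⟨h1, h2, h3⟩ := hGood
  have hupd : ∀ u ∈ S, Function.update g v c u = g u := by
    intro u hu
    refine Function.update_of_ne ?_ _ _
    rintro rfl; exact hvS hu
  have hselfv : ∀ d w, ¬ H.Adj (w, d) (w, d) := by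
    intro d w hadj
    exact G.irrefl (H.adj_sub _ _ _ _ hadj).1
  have hg'v : Function.update g v c v = c := Function.update_self _ _ _
  refine ⟨?_, ?_, ?_⟩
  · intro u hu
    rcases Finset.mem_insert.mp hu with h | hu
    · rw [h, hg'v]; exact hcL
    · rw [hupd u hu]; exact h1 u hu
  · intro u hu w hw hne
    rcases Finset.mem_insert.mp hu with h | hu
    · rcases Finset.mem_insert.mp hw with h' | hw
      · exact absurd (h.trans h'.symm) hne
      · rw [h, hg'v, hupd w hw]
        intro heq
        exact hcim (Finset.mem_image.mpr ⟨w, hw, heq.symm⟩)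
    · rcases Finset.mem_insert.mp hw with h' | hw
      · rw [h', hg'v, hupd u hu]
        intro heq
        exact hcim (Finset.mem_image.mpr ⟨u, hu, heq⟩)
      · rw [hupd u hu, hupd w hw]
        exact h2 u hu w hw hne
  · intro u hu w hw
    rcases Finset.mem_insert.mp hu with h | hu
    · rcases Finset.mem_insert.mp hw with h' | hw
      · rw [h, h', hg'v]; exact hselfv _ _
      · rw [h, hg'v, hupd w hw]
        intro hadj
        exact hcconf w hw (H.symm _ _ hadj)
    · rcases Finset.mem_insert.mp hw with h' | hw
      · rw [h', hg'v, hupd u hu]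
        exact hcconf u hu
      · rw [hupd u hu, hupd w hw]
        exact h3 u hu w hw

lemma fill {H : DPCover G ℕ} {k : ℕ} (hH : H.IsKCover k) {S T : Finset V} (hST : S ⊆ T)
    (hTk : T.card < k)
    (hpeel : ∀ T', S ⊆ T' → T' ⊆ T → (T' \ S).Nonempty → ∃ v ∈ T' \ S, degIn G T' v ≤ 1)
    {g : V → ℕ} (hGood : GoodCol H S g) :
    ∃ g', GoodCol H T g' ∧ ∀ x ∈ S, g' x = g x := by
  classical
  have MAIN : ∀ (n : ℕ) (T : Finset V), (T \ S).card = n → S ⊆ T → T.card < k →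
      (∀ T', S ⊆ T' → T' ⊆ T → (T' \ S).Nonempty → ∃ v ∈ T' \ S, degIn G T' v ≤ 1) →
      ∃ g', GoodCol H T g' ∧ ∀ x ∈ S, g' x = g x := by
    intro n
    induction n using Nat.strong_induction_on with
    | _ n ih =>
      intro T hn hST hTk hpeel
      by_cases hempty : (T \ S).Nonempty
      · obtain ⟨v, hv, hdeg⟩ := hpeel T hST (Finset.Subset.refl _) hempty
        have hvT : v ∈ T := (Finset.mem_sdiff.mp hv).1
        have hvS : v ∉ S := (Finset.mem_sdiff.mp hv).2
        set T' := T.erase v with hT'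
        have hST' : S ⊆ T' := by
          intro x hx
          exact Finset.mem_erase.mpr ⟨by rintro rfl; exact hvS hx, hST hx⟩
        have hT'sub : T' ⊆ T := Finset.erase_subset _ _
        have hcard : (T' \ S).card < n := by
          rw [← hn]
          apply Finset.card_lt_card
          constructor
          · exact Finset.sdiff_subset_sdiff hT'sub (le_refl _)
          · intro hsub
            have : v ∈ T' \ S := hsub (Finset.mem_sdiff.mpr ⟨hvT, hvS⟩)
            exact (Finset.notMem_erase v T) (Finset.mem_sdiff.mp this).1
        obtain ⟨g₁, hg₁, hagree⟩ := ih _ hcard T' rfl hST'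
          (lt_of_le_of_lt (Finset.card_le_card hT'sub) hTk)
          (fun T'' h1 h2 h3 => hpeel T'' h1 (le_trans h2 hT'sub) h3)
        have hbound : T'.card + degIn G T' v + (∅ : Finset ℕ).card < k := by
          have hd' : degIn G T' v ≤ degIn G T v :=
            Finset.card_le_card (Finset.filter_subset_filter _ hT'sub)
          have hc' : T'.card + 1 = T.card := by
            rw [hT', Finset.card_erase_of_mem hvT]
            have := Finset.card_pos.mpr ⟨v, hvT⟩
            omega
          simp only [Finset.card_empty]
          omega
        obtain ⟨c, hcL, hcim, -, hcconf⟩ := exists_color hH g₁ v ∅ hbound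
        refine ⟨Function.update g₁ v c, ?_, ?_⟩
        · have := step_update hg₁ (Finset.notMem_erase v T) hcL hcim hcconf
          rwa [Finset.insert_erase hvT] at this
        · intro x hx
          rw [Function.update_of_ne (by rintro rfl; exact hvS hx), hagree x hx]
      · have : T = S := by
          apply Finset.Subset.antisymm _ hST
          intro x hx
          by_contra hxs
          exact hempty ⟨x, Finset.mem_sdiff.mpr ⟨hx, hxs⟩⟩
        subst this
        exact ⟨g, hGood, fun x _ => rfl⟩
  exact MAIN _ T rfl hST hTk hpeel

/-- a good partial coloring with classes of size ≤ 2 -/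
def Good2 (H : DPCover G ℕ) (S : Finset V) (g : V → ℕ) : Prop :=
  (∀ v ∈ S, g v ∈ H.L v) ∧
  (∀ γ : ℕ, (S.filter (fun v => g v = γ)).card ≤ 2) ∧
  (∀ u ∈ S, ∀ v ∈ S, ¬ H.Adj (u, g u) (v, g v))

lemma exists_color2 {H : DPCover G ℕ} {k : ℕ} (hH : H.IsKCover k) {S : Finset V} (g : V → ℕ)
    (v : V) (hbound : S.card / 2 + degIn G S v < k) :
    ∃ c ∈ H.L v, (S.filter (fun u => g u = c)).card ≤ 1 ∧
      ∀ u ∈ S, ¬ H.Adj (u, g u) (v, c) := by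
  classical
  set D : Finset ℕ := (S.image g).filter (fun γ => 2 ≤ (S.filter (fun u => g u = γ)).card)
    with hD
  have hDcard : 2 * D.card ≤ S.card := by
    have h1 : S.card = ∑ γ ∈ S.image g, (S.filter (fun u => g u = γ)).card :=
      Finset.card_eq_sum_card_fiberwise (fun x hx => Finset.mem_image_of_mem g hx)
    have h2 : ∑ γ ∈ D, (S.filter (fun u => g u = γ)).card
        ≤ ∑ γ ∈ S.image g, (S.filter (fun u => g u = γ)).card :=
      Finset.sum_le_sum_of_subset (Finset.filter_subset _ _)
    have h3 : 2 * D.card ≤ ∑ γ ∈ D, (S.filter (fun u => g u = γ)).card := by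
      calc 2 * D.card = ∑ _γ ∈ D, 2 := by rw [Finset.sum_const]; ring
      _ ≤ _ := Finset.sum_le_sum (fun γ hγ => (Finset.mem_filter.mp hγ).2)
    omega
  set conf : Finset ℕ := (S.filter (fun u => G.Adj u v)).biUnion
    (fun u => (H.L v).filter (fun β => H.Adj (u, g u) (v, β))) with hconf
  have hconfcard : conf.card ≤ degIn G S v := by
    refine le_trans (Finset.card_biUnion_le) ?_
    rw [degIn]
    calc ∑ u ∈ S.filter (fun u => G.Adj u v),
          ((H.L v).filter (fun β => H.Adj (u, g u) (v, β))).card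
        ≤ ∑ _u ∈ S.filter (fun u => G.Adj u v), 1 := by
          refine Finset.sum_le_sum (fun u _ => ?_)
          rw [Finset.card_le_one]
          intro a ha b hb
          exact H.matching u (g u) v a b (Finset.mem_filter.mp ha).2 (Finset.mem_filter.mp hb).2
      _ = (S.filter (fun u => G.Adj u v)).card := by rw [Finset.sum_const, smul_eq_mul, mul_one]
  have hnsub : ¬ (H.L v ⊆ D ∪ conf) := by
    intro hsub
    have h4 := Finset.card_le_card hsub
    have h5 := Finset.card_union_le D conf
    rw [hH v] at h4
    omega
  obtain ⟨c, hcL, hcbad⟩ := Finset.not_subset.mp hnsub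
  refine ⟨c, hcL, ?_, ?_⟩
  · by_contra h
    push_neg at h
    have : c ∈ D := by
      rw [hD, Finset.mem_filter]
      have hne : (S.filter (fun u => g u = c)).Nonempty := by
        rw [← Finset.card_pos]; omega
      obtain ⟨x, hx⟩ := hne
      have := Finset.mem_filter.mp hx
      exact ⟨Finset.mem_image.mpr ⟨x, this.1, this.2⟩, by omega⟩
    exact hcbad (Finset.mem_union_left _ this)
  · intro u huS hadj
    have hGadj : G.Adj u v := (H.adj_sub _ _ _ _ hadj).1
    apply hcbad
    refine Finset.mem_union_right _ (Finset.mem_biUnion.mpr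
      ⟨u, Finset.mem_filter.mpr ⟨huS, hGadj⟩, Finset.mem_filter.mpr ⟨hcL, hadj⟩⟩)

lemma step_update2 {H : DPCover G ℕ} {S : Finset V} {g : V → ℕ} {v : V} {c : ℕ}
    (hGood : Good2 H S g) (hvS : v ∉ S) (hcL : c ∈ H.L v)
    (hcnt : (S.filter (fun u => g u = c)).card ≤ 1)
    (hcconf : ∀ u ∈ S, ¬ H.Adj (u, g u) (v, c)) :
    Good2 H (insert v S) (Function.update g v c) := by
  obtain ⟨h1, h2, h3⟩ := hGood
  have hupd : ∀ u ∈ S, Function.update g v c u = g u := by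
    intro u hu
    refine Function.update_of_ne ?_ _ _
    rintro rfl; exact hvS hu
  have hselfv : ∀ d w, ¬ H.Adj (w, d) (w, d) := by
    intro d w hadj
    exact G.irrefl (H.adj_sub _ _ _ _ hadj).1
  have hg'v : Function.update g v c v = c := Function.update_self _ _ _
  have hfilt : ∀ γ : ℕ, (S.filter (fun u => Function.update g v c u = γ))
      = S.filter (fun u => g u = γ) := by
    intro γ
    apply Finset.filter_congr
    intro u hu
    rw [hupd u hu]
  refine ⟨?_, ?_, ?_⟩
  · intro u hu
    rcases Finset.mem_insert.mp hu with h | hu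
    · rw [h, hg'v]; exact hcL
    · rw [hupd u hu]; exact h1 u hu
  · intro γ
    rw [Finset.filter_insert]
    split_ifs with h
    · rw [Finset.card_insert_of_notMem (fun hc => hvS (Finset.mem_filter.mp hc).1), hfilt]
      rw [hg'v] at h
      subst h
      omega
    · rw [hfilt]; exact h2 γ
  · intro u hu w hw
    rcases Finset.mem_insert.mp hu with h | hu
    · rcases Finset.mem_insert.mp hw with h' | hw
      · rw [h, h', hg'v]; exact hselfv _ _
      · rw [h, hg'v, hupd w hw]
        intro hadj
        exact hcconf w hw (H.symm _ _ hadj)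
    · rcases Finset.mem_insert.mp hw with h' | hw
      · rw [h', hg'v, hupd u hu]
        exact hcconf u hu
      · rw [hupd u hu, hupd w hw]
        exact h3 u hu w hw

lemma fill2 {H : DPCover G ℕ} {k : ℕ} (hH : H.IsKCover k) {S T : Finset V} (hST : S ⊆ T)
    (hTk : ∀ m : ℕ, m < T.card → m / 2 + 2 ≤ k)
    (hpeel : ∀ T', S ⊆ T' → T' ⊆ T → (T' \ S).Nonempty → ∃ v ∈ T' \ S, degIn G T' v ≤ 1)
    {g : V → ℕ} (hGood : Good2 H S g) :
    ∃ g', Good2 H T g' ∧ ∀ x ∈ S, g' x = g x := by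
  classical
  have MAIN : ∀ (n : ℕ) (T : Finset V), (T \ S).card = n → S ⊆ T →
      (∀ m : ℕ, m < T.card → m / 2 + 2 ≤ k) →
      (∀ T', S ⊆ T' → T' ⊆ T → (T' \ S).Nonempty → ∃ v ∈ T' \ S, degIn G T' v ≤ 1) →
      ∃ g', Good2 H T g' ∧ ∀ x ∈ S, g' x = g x := by
    intro n
    induction n using Nat.strong_induction_on with
    | _ n ih =>
      intro T hn hST hTk hpeel
      by_cases hempty : (T \ S).Nonempty
      · obtain ⟨v, hv, hdeg⟩ := hpeel T hST (Finset.Subset.refl _) hempty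
        have hvT : v ∈ T := (Finset.mem_sdiff.mp hv).1
        have hvS : v ∉ S := (Finset.mem_sdiff.mp hv).2
        set T' := T.erase v with hT'
        have hST' : S ⊆ T' := by
          intro x hx
          exact Finset.mem_erase.mpr ⟨by rintro rfl; exact hvS hx, hST hx⟩
        have hT'sub : T' ⊆ T := Finset.erase_subset _ _
        have hcard : (T' \ S).card < n := by
          rw [← hn]
          apply Finset.card_lt_card
          constructor
          · exact Finset.sdiff_subset_sdiff hT'sub (le_refl _)
          · intro hsub
            have : v ∈ T' \ S := hsub (Finset.mem_sdiff.mpr ⟨hvT, hvS⟩)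
            exact (Finset.notMem_erase v T) (Finset.mem_sdiff.mp this).1
        obtain ⟨g₁, hg₁, hagree⟩ := ih _ hcard T' rfl hST'
          (fun m hm => hTk m (lt_of_lt_of_le hm (Finset.card_le_card hT'sub)))
          (fun T'' h1 h2 h3 => hpeel T'' h1 (le_trans h2 hT'sub) h3)
        have hbound : T'.card / 2 + degIn G T' v < k := by
          have hd' : degIn G T' v ≤ degIn G T v :=
            Finset.card_le_card (Finset.filter_subset_filter _ hT'sub)
          have hc' : T'.card < T.card := Finset.card_erase_lt_of_mem hvT
          have := hTk T'.card hc'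
          omega
        obtain ⟨c, hcL, hcnt, hcconf⟩ := exists_color2 hH g₁ v hbound
        refine ⟨Function.update g₁ v c, ?_, ?_⟩
        · have := step_update2 hg₁ (Finset.notMem_erase v T) hcL hcnt hcconf
          rwa [Finset.insert_erase hvT] at this
        · intro x hx
          rw [Function.update_of_ne (by rintro rfl; exact hvS hx), hagree x hx]
      · have : T = S := by
          apply Finset.Subset.antisymm _ hST
          intro x hx
          by_contra hxs
          exact hempty ⟨x, Finset.mem_sdiff.mpr ⟨hx, hxs⟩⟩
        subst this
        exact ⟨g, hGood, fun x _ => rfl⟩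
  exact MAIN _ T rfl hST hTk hpeel

lemma isColoring_of_goodcol {H : DPCover G ℕ} {g : V → ℕ}
    (hGood : GoodCol H Finset.univ g) : H.IsColoring g ∧ IsBounded 1 g := by
  obtain ⟨h1, h2, h3⟩ := hGood
  refine ⟨⟨fun v => h1 v (Finset.mem_univ v),
    fun u w => h3 u (Finset.mem_univ u) w (Finset.mem_univ w)⟩, ?_⟩
  intro γ
  rw [classSize, Finset.card_le_one]
  intro a ha b hb
  simp only [Finset.mem_filter] at ha hb
  by_contra hne
  exact h2 a (Finset.mem_univ a) b (Finset.mem_univ b) hne (ha.2.trans hb.2.symm)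

lemma isColoring_of_good2 {H : DPCover G ℕ} {g : V → ℕ}
    (hGood : Good2 H Finset.univ g) : H.IsColoring g ∧ IsBounded 2 g := by
  obtain ⟨h1, h2, h3⟩ := hGood
  refine ⟨⟨fun v => h1 v (Finset.mem_univ v),
    fun u w => h3 u (Finset.mem_univ u) w (Finset.mem_univ w)⟩, ?_⟩
  intro γ
  rw [classSize]
  exact le_trans (le_of_eq (by congr 1)) (h2 γ)

lemma goodcol_singleton {H : DPCover G ℕ} {u : V} {α : ℕ} (hα : α ∈ H.L u) :
    GoodCol H {u} (fun _ => α) := by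
  refine ⟨?_, ?_, ?_⟩
  · intro v hv; rw [Finset.mem_singleton] at hv; rw [hv]; exact hα
  · intro a ha b hb hne
    rw [Finset.mem_singleton] at ha hb
    exact absurd (ha.trans hb.symm) hne
  · intro a ha b hb
    rw [Finset.mem_singleton] at ha hb
    rw [ha, hb]
    intro h
    exact G.irrefl (H.adj_sub _ _ _ _ h).1

lemma no_triangle (hG : G.IsAcyclic) {a b c : V} (hab : G.Adj a b) (hbc : G.Adj b c)
    (hac : G.Adj a c) : False := by
  classical
  have hp1 : (SimpleGraph.Walk.cons hac SimpleGraph.Walk.nil : G.Walk a c).IsPath := by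
    rw [SimpleGraph.Walk.cons_isPath_iff]
    exact ⟨SimpleGraph.Walk.IsPath.nil, by simp [hac.ne]⟩
  have hp2 : (SimpleGraph.Walk.cons hab (SimpleGraph.Walk.cons hbc SimpleGraph.Walk.nil) :
      G.Walk a c).IsPath := by
    rw [SimpleGraph.Walk.cons_isPath_iff, SimpleGraph.Walk.cons_isPath_iff]
    refine ⟨⟨SimpleGraph.Walk.IsPath.nil, by simp [hbc.ne]⟩, ?_⟩
    simp only [SimpleGraph.Walk.support_cons, SimpleGraph.Walk.support_nil]
    intro h
    rcases List.mem_cons.mp h with h | h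
    · exact G.irrefl (h ▸ hab)
    · rw [List.mem_singleton] at h
      exact G.irrefl (h ▸ hac)
  have := hG.path_unique ⟨_, hp1⟩ ⟨_, hp2⟩
  have hlen := congrArg (fun q : G.Path a c => q.1.length) this
  simp [SimpleGraph.Walk.length_cons] at hlen

lemma ceil_div_eq_one {n k : ℕ} (h1 : 1 ≤ n) (h2 : n ≤ k) : (n + k - 1) / k = 1 := by
  have := Nat.div_eq_of_lt_le (by omega : 1 * k ≤ n + k - 1) (by omega : n + k - 1 < (1+1) * k)
  simpa using this

lemma ceil_div_eq_two {n k : ℕ} (h1 : k < n) (h2 : n + 2 ≤ 2 * k) : (n + k - 1) / k = 2 := by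
  have := Nat.div_eq_of_lt_le (by omega : 2 * k ≤ n + k - 1) (by omega : n + k - 1 < (2+1) * k)
  simpa using this

end Infra

/-- Let `G` be an `n`-vertex forest, `2k ≥ n + 2`, and `H` a `k`-cover of `G`.
If `G` has no `⌈n/k⌉`-bounded `H`-coloring then: (a) `k = n` and `G ≅ K_{1,n-1}`;
(b) `H` is plain and every `H(u,v)` is a derangement; (c) for every vertex `x`
and neighbors `y, z` of `x`, `H(y,x) = H(z,x)`. -/
theorem forest_no_bounded_coloring_structure {V : Type*} [Fintype V] [DecidableEq V]
    (n k : ℕ) (hcard : Fintype.card V = n) (hk : n + 2 ≤ 2 * k)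
    (G : SimpleGraph V) (hforest : G.IsAcyclic)
    (H : DPCover G ℕ) (hH : H.IsKCover k)
    (hno : ¬ ∃ f : V → ℕ, H.IsColoring f ∧ IsBounded ((n + k - 1) / k) f) :
    (k = n ∧ Nonempty (G ≃g starGraph n)) ∧
    (H.IsPlain k ∧ ∀ u v, G.Adj u v → H.IsDerangement u v) ∧
    (∀ x y z : V, G.Adj y x → G.Adj z x →
      ∀ α β, (H.Adj (y, α) (x, β) ↔ H.Adj (z, α) (x, β))) := by
  classical
  have contra : ∀ f : V → ℕ, H.IsColoring f → IsBounded ((n + k - 1) / k) f → False :=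
    fun f h1 h2 => hno ⟨f, h1, h2⟩
  -- `n ≥ 1`
  have hn1 : 1 ≤ n := by
    by_contra h
    have hV : IsEmpty V := Fintype.card_eq_zero_iff.mp (by omega)
    refine contra (fun _ => 0) ⟨fun v => isEmptyElim v, fun u _ => isEmptyElim u⟩ ?_
    intro γ
    rw [classSize]
    simp [Finset.univ_eq_empty]
  -- `k = n`
  have hkn : k = n := by
    rcases lt_trichotomy k n with hlt | heq | hgt
    · exfalso
      have hGood0 : Good2 H ∅ (fun _ => 0) := ⟨by simp, by simp, by simp⟩
      obtain ⟨g, hg, -⟩ := fill2 hH (Finset.empty_subset Finset.univ)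
        (fun m hm => by rw [Finset.card_univ, hcard] at hm; omega)
        (fun T' hS hT hne => peel hforest hS hne (by simp)) hGood0
      obtain ⟨hcol, hbnd⟩ := isColoring_of_good2 hg
      refine contra g hcol ?_
      rw [ceil_div_eq_two hlt hk]
      exact hbnd
    · exact heq
    · exfalso
      have hGood0 : GoodCol H ∅ (fun _ => 0) := ⟨by simp, by simp, by simp⟩
      obtain ⟨g, hg, -⟩ := fill hH (Finset.empty_subset Finset.univ)
        (by rw [Finset.card_univ, hcard]; omega)
        (fun T' hS hT hne => peel hforest hS hne (by simp)) hGood0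
      obtain ⟨hcol, hbnd⟩ := isColoring_of_goodcol hg
      refine contra g hcol ?_
      rw [ceil_div_eq_one hn1 (by omega)]
      exact hbnd
  subst hkn
  -- now `k = k`; rename for clarity: the list size is `k`
  have hn2 : 2 ≤ k := by omega
  have hm1 : (k + k - 1) / k = 1 := ceil_div_eq_one hn1 (le_refl k)
  have hcontra1 : ∀ g : V → ℕ, GoodCol H Finset.univ g → False := by
    intro g hg
    obtain ⟨hcol, hbnd⟩ := isColoring_of_goodcol hg
    exact contra g hcol (by rw [hm1]; exact hbnd)
  have hNV : Nonempty V := Fintype.card_pos_iff.mp (by omega)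
  -- a generic way to extend a good coloring of `univ.erase z`
  have hrun : ∀ (z : V) (S : Finset V) (g₀ : V → ℕ), S ⊆ Finset.univ.erase z →
      GoodCol H S g₀ →
      (∀ T', S ⊆ T' → T' ⊆ Finset.univ.erase z → (T' \ S).Nonempty →
        ∃ v ∈ T' \ S, degIn G T' v ≤ 1) →
      ∃ g, GoodCol H (Finset.univ.erase z) g ∧ ∀ x ∈ S, g x = g₀ x := by
    intro z S g₀ hS hg hp
    exact fill hH hS (by rw [Finset.card_erase_of_mem (Finset.mem_univ z),
      Finset.card_univ, hcard]; omega) hp hg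
  -- no isolated vertices
  have hno_iso : ∀ v : V, ∃ u, G.Adj u v := by
    intro v
    by_contra hiso
    push_neg at hiso
    have hGood0 : GoodCol H ∅ (fun _ => 0) := ⟨by simp, by simp, by simp⟩
    obtain ⟨g, hg, -⟩ := hrun v ∅ (fun _ => 0) (Finset.empty_subset _) hGood0
      (fun T' hS hT hne => peel hforest hS hne (by simp))
    have hdeg0 : degIn G (Finset.univ.erase v) v = 0 := by
      rw [degIn, Finset.card_eq_zero, Finset.filter_eq_empty_iff]
      intro u _
      exact hiso u
    have hbound : (Finset.univ.erase v).card + degIn G (Finset.univ.erase v) v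
        + (∅ : Finset ℕ).card < k := by
      rw [hdeg0, Finset.card_erase_of_mem (Finset.mem_univ v), Finset.card_univ, hcard]
      simp
      omega
    obtain ⟨c, hcL, hcim, -, hcconf⟩ := exists_color hH g v ∅ hbound
    have hstep := step_update hg (Finset.notMem_erase v _) hcL hcim hcconf
    rw [Finset.insert_erase (Finset.mem_univ v)] at hstep
    exact hcontra1 _ hstep
  -- find a leaf z₀ with unique neighbor w
  obtain ⟨z₀, -, hz₀deg⟩ := exists_leaf hforest Finset.univ Finset.univ_nonempty
  obtain ⟨w, hwz⟩ := hno_iso z₀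
  have hwuniq : ∀ u, G.Adj u z₀ → u = w := by
    intro u hu
    have h1 : u ∈ Finset.univ.filter (fun x => G.Adj x z₀) := by
      simp [hu]
    have h2 : w ∈ Finset.univ.filter (fun x => G.Adj x z₀) := by
      simp [hwz]
    exact Finset.card_le_one.mp hz₀deg u h1 w h2
  have hwz₀ne : w ≠ z₀ := hwz.ne
  -- the key failure analysis at a leaf
  have failkey : ∀ (z wz : V), G.Adj wz z → (∀ u, G.Adj u z → u = wz) →
      ∀ g, GoodCol H (Finset.univ.erase z) g →
      ((Finset.univ.erase z).image g ⊆ H.L z) ∧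
      ∃ c, H.Adj (wz, g wz) (z, c) ∧ c ∉ (Finset.univ.erase z).image g := by
    intro z wz hadj huniq g hg
    set T := Finset.univ.erase z with hT
    have hzT : z ∉ T := Finset.notMem_erase _ _
    have hTcard : T.card = k - 1 := by
      rw [hT, Finset.card_erase_of_mem (Finset.mem_univ z), Finset.card_univ, hcard]
    set conf : Finset ℕ := (H.L z).filter (fun c => H.Adj (wz, g wz) (z, c)) with hconf
    have hcover : H.L z ⊆ T.image g ∪ conf := by
      intro c hcL
      by_cases hcim : c ∈ T.image g
      · exact Finset.mem_union_left _ hcim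
      · refine Finset.mem_union_right _ ?_
        by_cases hconfc : ∀ u ∈ T, ¬ H.Adj (u, g u) (z, c)
        · exfalso
          have hstep := step_update hg hzT hcL hcim hconfc
          rw [Finset.insert_erase (Finset.mem_univ z)] at hstep
          exact hcontra1 _ hstep
        · push_neg at hconfc
          obtain ⟨u, huT, hadju⟩ := hconfc
          have hu : u = wz := huniq u (H.adj_sub _ _ _ _ hadju).1
          rw [hconf, Finset.mem_filter]
          exact ⟨hcL, hu ▸ hadju⟩
    have hconfcard : conf.card ≤ 1 := by
      rw [Finset.card_le_one]
      intro a ha b hb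
      exact H.matching _ _ _ _ _ (Finset.mem_filter.mp ha).2 (Finset.mem_filter.mp hb).2
    have himgcard : (T.image g).card = k - 1 := by
      rw [Finset.card_image_of_injOn, hTcard]
      intro x hx y hy hxy
      by_contra hne
      exact hg.2.1 x (by simpa using hx) y (by simpa using hy) hne hxy
    have hunion : (T.image g ∪ conf).card ≤ k := by
      have := Finset.card_union_le (T.image g) conf
      omega
    have heq : H.L z = T.image g ∪ conf := by
      apply Finset.eq_of_subset_of_card_le hcover
      rw [hH z]
      exact hunion
    constructor
    · rw [heq]
      exact Finset.subset_union_left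
    · have hnsub : ¬ conf ⊆ T.image g := by
        intro hsub
        have : T.image g ∪ conf = T.image g := Finset.union_eq_left.mpr hsub
        rw [this] at heq
        have := hH z
        rw [heq] at this
        omega
      obtain ⟨c, hcconf, hcim⟩ := Finset.not_subset.mp hnsub
      exact ⟨c, (Finset.mem_filter.mp hcconf).2, hcim⟩
  -- peel-instance helpers for pairs and triples
  have hcon_pair : ∀ x y : V, G.Adj x y →
      2 * ({x, y} : Finset V).card ≤ 2 + ∑ s ∈ ({x, y} : Finset V), degIn G {x, y} s := by
    intro x y hxy
    have hne : x ≠ y := hxy.ne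
    have hc2 : ({x, y} : Finset V).card = 2 := by
      rw [Finset.card_insert_of_notMem (by simp [hne]), Finset.card_singleton]
    have hsum : ∑ s ∈ ({x, y} : Finset V), degIn G {x, y} s =
        degIn G {x, y} x + degIn G {x, y} y := by
      rw [Finset.sum_insert (by simp [hne]), Finset.sum_singleton]
    have h1 : 1 ≤ degIn G {x, y} x :=
      Finset.card_pos.mpr ⟨y, Finset.mem_filter.mpr ⟨by simp, hxy.symm⟩⟩
    have h2 : 1 ≤ degIn G {x, y} y :=
      Finset.card_pos.mpr ⟨x, Finset.mem_filter.mpr ⟨by simp, hxy⟩⟩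
    omega
  have hcon_triple : ∀ x y z : V, G.Adj x y → G.Adj y z → x ≠ z →
      2 * ({x, y, z} : Finset V).card ≤ 2 + ∑ s ∈ ({x, y, z} : Finset V), degIn G {x, y, z} s := by
    intro x y z hxy hyz hxz
    have hxy' : x ≠ y := hxy.ne
    have hyz' : y ≠ z := hyz.ne
    have hc3 : ({x, y, z} : Finset V).card ≤ 3 :=
      le_trans (Finset.card_insert_le _ _) (by
        have := Finset.card_insert_le y ({z} : Finset V)
        simp only [Finset.card_singleton] at this ⊢
        omega)
    have hsum : ∑ s ∈ ({x, y, z} : Finset V), degIn G {x, y, z} s =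
        degIn G {x, y, z} x + (degIn G {x, y, z} y + degIn G {x, y, z} z) := by
      rw [Finset.sum_insert (by simp [hxy', hxz]), Finset.sum_insert (by simp [hyz']),
        Finset.sum_singleton]
    have h1 : 1 ≤ degIn G {x, y, z} x :=
      Finset.card_pos.mpr ⟨y, Finset.mem_filter.mpr ⟨by simp, hxy.symm⟩⟩
    have h3 : 1 ≤ degIn G {x, y, z} z :=
      Finset.card_pos.mpr ⟨y, Finset.mem_filter.mpr ⟨by simp, hyz⟩⟩
    have h2 : 2 ≤ degIn G {x, y, z} y := by
      have hsub : ({x, z} : Finset V) ⊆ ({x, y, z} : Finset V).filter (fun u => G.Adj u y) := by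
        intro t ht
        rcases Finset.mem_insert.mp ht with h | h
        · exact Finset.mem_filter.mpr ⟨by simp [h], h ▸ hxy⟩
        · rw [Finset.mem_singleton] at h
          exact Finset.mem_filter.mpr ⟨by simp [h], h ▸ hyz.symm⟩
      have := Finset.card_le_card hsub
      rw [Finset.card_insert_of_notMem (by simp [hxz]), Finset.card_singleton] at this
      exact this
    omega
  -- all lists are equal (plainness)
  have hplain : ∀ u : V, H.L u = H.L z₀ := by
    intro u
    by_cases huz : u = z₀
    · rw [huz]
    · have hsub : H.L u ⊆ H.L z₀ := by
        intro α hα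
        obtain ⟨g, hg, hgu⟩ := hrun z₀ {u} (fun _ => α)
          (Finset.singleton_subset_iff.mpr (Finset.mem_erase.mpr ⟨huz, Finset.mem_univ u⟩))
          (goodcol_singleton hα)
          (fun T' hS hT hne => peel hforest hS hne (by rw [Finset.card_singleton]; omega))
        have himg := (failkey z₀ w hwz hwuniq g hg).1
        refine himg ?_
        exact Finset.mem_image.mpr ⟨u, Finset.mem_erase.mpr ⟨huz, Finset.mem_univ u⟩,
          hgu u (Finset.mem_singleton_self u)⟩
      exact Finset.eq_of_subset_of_card_le hsub (by rw [hH, hH])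
  -- derangement property at any leaf
  have hsigma : ∀ (z wz : V), G.Adj wz z → (∀ u, G.Adj u z → u = wz) →
      ∀ a ∈ H.L z₀, ∃ d, H.Adj (wz, a) (z, d) ∧ d ≠ a := by
    intro z wz hadj huniq a haΓ
    have hwzz : wz ≠ z := hadj.ne
    have haL : a ∈ H.L wz := by rw [hplain wz]; exact haΓ
    obtain ⟨g, hg, hgw⟩ := hrun z {wz} (fun _ => a)
      (Finset.singleton_subset_iff.mpr (Finset.mem_erase.mpr ⟨hwzz, Finset.mem_univ wz⟩))
      (goodcol_singleton haL)
      (fun T' hS hT hne => peel hforest hS hne (by rw [Finset.card_singleton]; omega))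
    obtain ⟨himg, c, hc1, hc2⟩ := failkey z wz hadj huniq g hg
    have hgwa : g wz = a := hgw wz (Finset.mem_singleton_self wz)
    rw [hgwa] at hc1
    refine ⟨c, hc1, ?_⟩
    rintro rfl
    exact hc2 (Finset.mem_image.mpr ⟨wz, Finset.mem_erase.mpr ⟨hwzz, Finset.mem_univ wz⟩, hgwa⟩)
  -- the central exclusion property
  have hstar_key : ∀ g, GoodCol H (Finset.univ.erase z₀) g →
      ∀ d, H.Adj (w, g w) (z₀, d) → d ∉ (Finset.univ.erase z₀).image g := by
    intro g hg d hd
    obtain ⟨-, c, hc1, hc2⟩ := failkey z₀ w hwz hwuniq g hg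
    rwa [H.matching _ _ _ _ _ hd hc1]
  obtain ⟨a, ha⟩ : (H.L z₀).Nonempty := Finset.card_pos.mp (by rw [hH z₀]; omega)
  obtain ⟨d, hda, hdnea⟩ := hsigma z₀ w hwz hwuniq a ha
  have hdΓ : d ∈ H.L z₀ := (H.adj_sub _ _ _ _ hda).2.2
  -- Claim A: every neighbor of w (other than z₀) is matched a ↦ d
  have claimA : ∀ c1, G.Adj w c1 → c1 ≠ z₀ → H.Adj (w, a) (c1, d) := by
    intro c1 hc1adj hc1z
    by_contra hnadj
    have hc1w : c1 ≠ w := hc1adj.ne'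
    set g₀ : V → ℕ := fun x => if x = w then a else d with hg₀
    have hg₀w : g₀ w = a := if_pos rfl
    have hg₀c1 : g₀ c1 = d := if_neg hc1w
    have hGood : GoodCol H ({w, c1} : Finset V) g₀ := by
      refine ⟨?_, ?_, ?_⟩
      · intro v hv
        rcases Finset.mem_insert.mp hv with h | h
        · rw [h, hg₀w, hplain w]; exact ha
        · rw [Finset.mem_singleton] at h
          rw [h, hg₀c1, hplain c1]; exact hdΓ
      · intro u hu v hv hne
        rcases Finset.mem_insert.mp hu with h | h <;>
          rcases Finset.mem_insert.mp hv with h' | h'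
        · exact absurd (h.trans h'.symm) hne
        · rw [Finset.mem_singleton] at h'
          rw [h, h', hg₀w, hg₀c1]; exact hdnea.symm
        · rw [Finset.mem_singleton] at h
          rw [h, h', hg₀c1, hg₀w]; exact hdnea
        · rw [Finset.mem_singleton] at h h'
          exact absurd (h.trans h'.symm) hne
      · intro u hu v hv
        rcases Finset.mem_insert.mp hu with h | h <;>
          rcases Finset.mem_insert.mp hv with h' | h'
        · rw [h, h', hg₀w]
          intro hx; exact G.irrefl (H.adj_sub _ _ _ _ hx).1
        · rw [Finset.mem_singleton] at h'
          rw [h, h', hg₀w, hg₀c1]; exact hnadj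
        · rw [Finset.mem_singleton] at h
          rw [h, h', hg₀c1, hg₀w]
          intro hx; exact hnadj (H.symm _ _ hx)
        · rw [Finset.mem_singleton] at h h'
          rw [h, h', hg₀c1]
          intro hx; exact G.irrefl (H.adj_sub _ _ _ _ hx).1
    have hSsub : ({w, c1} : Finset V) ⊆ Finset.univ.erase z₀ := by
      intro t ht
      rcases Finset.mem_insert.mp ht with h | h
      · exact h ▸ Finset.mem_erase.mpr ⟨hwz₀ne, Finset.mem_univ w⟩
      · rw [Finset.mem_singleton] at h
        exact h ▸ Finset.mem_erase.mpr ⟨hc1z, Finset.mem_univ c1⟩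
    obtain ⟨g, hg, hagree⟩ := hrun z₀ {w, c1} g₀ hSsub hGood
      (fun T' hS hT hne => peel hforest hS hne (hcon_pair w c1 hc1adj))
    have hgwa : g w = a := by rw [hagree w (by simp), hg₀w]
    have hgc1d : g c1 = d := by rw [hagree c1 (by simp), hg₀c1]
    refine hstar_key g hg d (by rw [hgwa]; exact hda) ?_
    exact Finset.mem_image.mpr ⟨c1, Finset.mem_erase.mpr ⟨hc1z, Finset.mem_univ c1⟩, hgc1d⟩
  by_cases hcase1 : ∃ c1, G.Adj w c1 ∧ c1 ≠ z₀ ∧ ∃ c2, G.Adj c1 c2 ∧ c2 ≠ w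
  · exfalso
    obtain ⟨c1, hwc1, hc1z, c2, hc1c2, hc2w⟩ := hcase1
    have hc1w : c1 ≠ w := hwc1.ne'
    have hc2c1 : c2 ≠ c1 := hc1c2.ne'
    have hc2z : c2 ≠ z₀ := by
      rintro rfl
      exact hc1w (hwuniq c1 hc1c2)
    have hnwc2 : ¬ G.Adj w c2 := fun h => no_triangle hforest hwc1 hc1c2 h
    have hwc2ne : w ≠ c2 := Ne.symm hc2w
    have hAd : H.Adj (w, a) (c1, d) := claimA c1 hwc1 hc1z
    have h4 : 4 ≤ k := by
      have hsub : ({z₀, w, c1, c2} : Finset V) ⊆ Finset.univ := Finset.subset_univ _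
      have hcard4 : ({z₀, w, c1, c2} : Finset V).card = 4 := by
        rw [Finset.card_insert_of_notMem
            (by simp [Ne.symm hwz₀ne, Ne.symm hc1z, Ne.symm hc2z]),
          Finset.card_insert_of_notMem (by simp [Ne.symm hc1w, hwc2ne]),
          Finset.card_insert_of_notMem (by simp [Ne.symm hc2c1]), Finset.card_singleton]
      have := Finset.card_le_card hsub
      rw [hcard4, Finset.card_univ, hcard] at this
      exact this
    set BAD := (H.L z₀).filter (fun b => H.Adj (c1, b) (c2, d)) with hBAD
    have hBADcard : BAD.card ≤ 1 := by
      rw [Finset.card_le_one]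
      intro b1 hb1 b2 hb2
      have h1 := H.symm _ _ (Finset.mem_filter.mp hb1).2
      have h2 := H.symm _ _ (Finset.mem_filter.mp hb2).2
      exact H.matching _ _ _ _ _ h1 h2
    have hbex : ∃ b ∈ H.L z₀, b ≠ a ∧ b ≠ d ∧ b ∉ BAD := by
      have hne : ((H.L z₀) \ (insert a (insert d BAD))).Nonempty := by
        apply Finset.card_pos.mp
        have h1 : (insert a (insert d BAD)).card ≤ 3 := by
          have h2 := Finset.card_insert_le a (insert d BAD)
          have h3 := Finset.card_insert_le d BAD
          omega
        have h5 := Finset.le_card_sdiff (insert a (insert d BAD)) (H.L z₀)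
        have h6 := hH z₀
        omega
      obtain ⟨b, hb⟩ := hne
      rw [Finset.mem_sdiff] at hb
      refine ⟨b, hb.1, ?_, ?_, ?_⟩
      · intro h; exact hb.2 (by simp [h])
      · intro h; exact hb.2 (by simp [h])
      · intro h; exact hb.2 (by simp [h])
    obtain ⟨b, hbΓ, hba, hbd, hbBAD⟩ := hbex
    have hnadj12 : ¬ H.Adj (c1, b) (c2, d) := fun h => hbBAD (Finset.mem_filter.mpr ⟨hbΓ, h⟩)
    set g₀ : V → ℕ := fun x => if x = w then a else if x = c1 then b else d with hg₀
    have hg₀w : g₀ w = a := if_pos rfl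
    have hg₀c1 : g₀ c1 = b := by rw [hg₀]; simp [hc1w]
    have hg₀c2 : g₀ c2 = d := by rw [hg₀]; simp [hc2w, hc2c1]
    have hmem3 : ∀ v ∈ ({w, c1, c2} : Finset V), v = w ∨ v = c1 ∨ v = c2 := by
      intro v hv; simpa using hv
    have hGood : GoodCol H ({w, c1, c2} : Finset V) g₀ := by
      refine ⟨?_, ?_, ?_⟩
      · intro v hv
        rcases hmem3 v hv with rfl | rfl | rfl
        · rw [hg₀w, hplain]; exact ha
        · rw [hg₀c1, hplain]; exact hbΓ
        · rw [hg₀c2, hplain]; exact hdΓ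
      · intro u hu v hv hne
        rcases hmem3 u hu with rfl | rfl | rfl <;> rcases hmem3 v hv with rfl | rfl | rfl <;>
          first
            | exact absurd rfl hne
            | (rw [hg₀w, hg₀c1]; exact Ne.symm hba)
            | (rw [hg₀c1, hg₀w]; exact hba)
            | (rw [hg₀w, hg₀c2]; exact Ne.symm hdnea)
            | (rw [hg₀c2, hg₀w]; exact hdnea)
            | (rw [hg₀c1, hg₀c2]; exact hbd)
            | (rw [hg₀c2, hg₀c1]; exact Ne.symm hbd)
      · have hself : ∀ (x : V) (c : ℕ), ¬ H.Adj (x, c) (x, c) := by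
          intro x c hx; exact G.irrefl (H.adj_sub _ _ _ _ hx).1
        intro u hu v hv
        rcases hmem3 u hu with rfl | rfl | rfl <;> rcases hmem3 v hv with rfl | rfl | rfl
        · exact hself _ _
        · rw [hg₀w, hg₀c1]
          intro h
          exact hbd (H.matching _ _ _ _ _ h hAd)
        · rw [hg₀w, hg₀c2]
          intro h
          exact hnwc2 (H.adj_sub _ _ _ _ h).1
        · rw [hg₀c1, hg₀w]
          intro h
          exact hbd (H.matching _ _ _ _ _ (H.symm _ _ h) hAd)
        · exact hself _ _
        · rw [hg₀c1, hg₀c2]; exact hnadj12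
        · rw [hg₀c2, hg₀w]
          intro h
          exact hnwc2 (H.adj_sub _ _ _ _ (H.symm _ _ h)).1
        · rw [hg₀c2, hg₀c1]
          intro h
          exact hnadj12 (H.symm _ _ h)
        · exact hself _ _
    have hSsub : ({w, c1, c2} : Finset V) ⊆ Finset.univ.erase z₀ := by
      intro t ht
      rcases hmem3 t ht with rfl | rfl | rfl
      · exact Finset.mem_erase.mpr ⟨hwz₀ne, Finset.mem_univ _⟩
      · exact Finset.mem_erase.mpr ⟨hc1z, Finset.mem_univ _⟩
      · exact Finset.mem_erase.mpr ⟨hc2z, Finset.mem_univ _⟩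
    obtain ⟨g, hg, hagree⟩ := hrun z₀ {w, c1, c2} g₀ hSsub hGood
      (fun T' hS hT hne => peel hforest hS hne (hcon_triple w c1 c2 hwc1 hc1c2 hwc2ne))
    have hgwa : g w = a := by rw [hagree w (by simp), hg₀w]
    have hgc2d : g c2 = d := by rw [hagree c2 (by simp), hg₀c2]
    refine hstar_key g hg d (by rw [hgwa]; exact hda) ?_
    exact Finset.mem_image.mpr ⟨c2, Finset.mem_erase.mpr ⟨hc2z, Finset.mem_univ c2⟩, hgc2d⟩
  push_neg at hcase1
  by_cases hcase2 : ∃ p, p ≠ w ∧ ¬ G.Adj w p ∧ p ≠ z₀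
  · exfalso
    obtain ⟨p, hpw, hpnadj, hpz⟩ := hcase2
    set g₀ : V → ℕ := fun x => if x = w then a else d with hg₀
    have hg₀w : g₀ w = a := if_pos rfl
    have hg₀p : g₀ p = d := if_neg hpw
    have hGood : GoodCol H ({w, p} : Finset V) g₀ := by
      have hmem2 : ∀ v ∈ ({w, p} : Finset V), v = w ∨ v = p := by
        intro v hv; simpa using hv
      have hself : ∀ (x : V) (c : ℕ), ¬ H.Adj (x, c) (x, c) := by
        intro x c hx; exact G.irrefl (H.adj_sub _ _ _ _ hx).1
      refine ⟨?_, ?_, ?_⟩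
      · intro v hv
        rcases hmem2 v hv with rfl | rfl
        · rw [hg₀w, hplain]; exact ha
        · rw [hg₀p, hplain]; exact hdΓ
      · intro u hu v hv hne
        rcases hmem2 u hu with rfl | rfl <;> rcases hmem2 v hv with rfl | rfl
        · exact absurd rfl hne
        · rw [hg₀w, hg₀p]; exact Ne.symm hdnea
        · rw [hg₀p, hg₀w]; exact hdnea
        · exact absurd rfl hne
      · intro u hu v hv
        rcases hmem2 u hu with rfl | rfl <;> rcases hmem2 v hv with rfl | rfl
        · exact hself _ _
        · intro h; exact hpnadj (H.adj_sub _ _ _ _ h).1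
        · intro h; exact hpnadj (H.adj_sub _ _ _ _ (H.symm _ _ h)).1
        · exact hself _ _
    have hSsub : ({w, p} : Finset V) ⊆ Finset.univ.erase z₀ := by
      intro t ht
      rcases (by simpa using ht : t = w ∨ t = p) with rfl | rfl
      · exact Finset.mem_erase.mpr ⟨hwz₀ne, Finset.mem_univ _⟩
      · exact Finset.mem_erase.mpr ⟨hpz, Finset.mem_univ _⟩
    -- the custom peeling argument
    have hpeelwp : ∀ T', ({w, p} : Finset V) ⊆ T' → T' ⊆ Finset.univ.erase z₀ →
        (T' \ ({w, p} : Finset V)).Nonempty →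
        ∃ v ∈ T' \ ({w, p} : Finset V), degIn G T' v ≤ 1 := by
      intro T' hS hT hne
      by_cases hx : ∃ v ∈ T' \ ({w, p} : Finset V), G.Adj w v
      · obtain ⟨v, hv, hadjv⟩ := hx
        refine ⟨v, hv, ?_⟩
        have hvz : v ≠ z₀ := by
          have := hT (Finset.mem_sdiff.mp hv).1
          exact (Finset.mem_erase.mp this).1
        rw [degIn, Finset.card_le_one]
        intro x hx1 y hy1
        have hx2 := Finset.mem_filter.mp hx1
        have hy2 := Finset.mem_filter.mp hy1
        have hxw : x = w := hcase1 v hadjv hvz x hx2.2.symm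
        have hyw : y = w := hcase1 v hadjv hvz y hy2.2.symm
        rw [hxw, hyw]
      · push_neg at hx
        set U := T'.filter (fun x => ¬ G.Adj w x ∧ x ≠ w) with hU
        have hpU : p ∈ U := by
          rw [hU, Finset.mem_filter]
          exact ⟨hS (by simp), hpnadj, hpw⟩
        have hUsub : U ⊆ T' := Finset.filter_subset _ _
        have hUne : (U \ ({p} : Finset V)).Nonempty := by
          obtain ⟨v, hv⟩ := hne
          have hv1 := Finset.mem_sdiff.mp hv
          have hvw : v ≠ w := by
            intro h
            exact hv1.2 (by simp [h])
          have hvp : v ≠ p := by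
            intro h
            exact hv1.2 (by simp [h])
          refine ⟨v, Finset.mem_sdiff.mpr ⟨?_, by simp [hvp]⟩⟩
          rw [hU, Finset.mem_filter]
          exact ⟨hv1.1, hx v hv, hvw⟩
        obtain ⟨v, hvU, hvdeg⟩ := peel hforest (Finset.singleton_subset_iff.mpr hpU) hUne
          (by rw [Finset.card_singleton]; omega)
        have hv1 := Finset.mem_sdiff.mp hvU
        have hv2 := Finset.mem_filter.mp hv1.1
        have hvp : v ≠ p := by
          intro h
          exact hv1.2 (by simp [h])
        refine ⟨v, Finset.mem_sdiff.mpr ⟨hv2.1, by simp [hvp, hv2.2.2]⟩, ?_⟩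
        refine le_trans (Finset.card_le_card ?_) hvdeg
        intro u hu
        have hu1 := Finset.mem_filter.mp hu
        refine Finset.mem_filter.mpr ⟨?_, hu1.2⟩
        rw [hU, Finset.mem_filter]
        have huz : u ≠ z₀ := by
          have := hT hu1.1
          exact (Finset.mem_erase.mp this).1
        have huw : u ≠ w := by
          rintro rfl
          exact hv2.2.1 hu1.2
        refine ⟨hu1.1, ?_, huw⟩
        intro hadjwu
        exact hv2.2.2 (hcase1 u hadjwu huz v hu1.2)
    obtain ⟨g, hg, hagree⟩ := hrun z₀ {w, p} g₀ hSsub hGood hpeelwp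
    have hgwa : g w = a := by rw [hagree w (by simp), hg₀w]
    have hgpd : g p = d := by rw [hagree p (by simp), hg₀p]
    refine hstar_key g hg d (by rw [hgwa]; exact hda) ?_
    exact Finset.mem_image.mpr ⟨p, Finset.mem_erase.mpr ⟨hpz, Finset.mem_univ p⟩, hgpd⟩
  push_neg at hcase2
  -- G is the star centered at w
  have hstaradj : ∀ q : V, q ≠ w → G.Adj w q := by
    intro q hq
    by_cases hqz : q = z₀
    · rw [hqz]; exact hwz
    · by_contra hnadj
      exact hqz (hcase2 q hq hnadj)
  have hstarchar : ∀ u v : V, G.Adj u v ↔ (u ≠ v ∧ (u = w ∨ v = w)) := by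
    intro u v
    constructor
    · intro hadj
      refine ⟨hadj.ne, ?_⟩
      by_contra hcon
      push_neg at hcon
      obtain ⟨huw, hvw⟩ := hcon
      by_cases huz : u = z₀
      · rw [huz] at hadj
        exact hvw (hwuniq v hadj.symm)
      · exact hvw (hcase1 u (hstaradj u huw) huz v hadj)
    · rintro ⟨hne, h | h⟩
      · rw [h]
        exact hstaradj v (fun hv => hne (h.trans hv.symm))
      · rw [h]
        exact (hstaradj u (fun hu => hne (hu.trans h.symm))).symm
  have hleaf : ∀ x : V, x ≠ w → (G.Adj w x ∧ ∀ u, G.Adj u x → u = w) := by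
    intro x hxw
    refine ⟨hstaradj x hxw, ?_⟩
    intro u hu
    rcases ((hstarchar u x).mp hu).2 with h | h
    · exact h
    · exact absurd h hxw
  -- the isomorphism with the star graph
  haveI : NeZero k := ⟨by omega⟩
  have hiso : Nonempty (G ≃g starGraph k) := by
    let e₀ : V ≃ Fin k := Fintype.equivFinOfCardEq hcard
    let e : V ≃ Fin k := e₀.trans (Equiv.swap (e₀ w) 0)
    have hew : e w = 0 := by simp [e, Equiv.swap_apply_left]
    have h0 : ∀ u : V, (e u).val = 0 ↔ u = w := by
      intro u
      rw [show ((e u).val = 0 ↔ e u = 0) from ⟨fun h => Fin.ext h, fun h => by rw [h]; rfl⟩,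
        ← hew, Equiv.apply_eq_iff_eq]
    refine ⟨⟨e, ?_⟩⟩
    intro u v
    show (starGraph k).Adj (e u) (e v) ↔ G.Adj u v
    rw [starGraph, SimpleGraph.fromRel_adj, hstarchar u v, h0, h0, ne_eq,
      Equiv.apply_eq_iff_eq, ← ne_eq]
  -- derangement in both directions
  have hderang_from_w : ∀ v, v ≠ w → ∀ α ∈ H.L w, ∃ β, H.Adj (w, α) (v, β) ∧ β ≠ α := by
    intro v hvw α hα
    obtain ⟨hwv, hvuniq⟩ := hleaf v hvw
    exact hsigma v w hwv hvuniq α (by rwa [hplain w] at hα)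
  have hderang_to_w : ∀ u, u ≠ w → ∀ α ∈ H.L u, ∃ β, H.Adj (u, α) (w, β) ∧ β ≠ α := by
    intro u huw α hα
    rw [hplain u] at hα
    obtain ⟨hwu, huuniq⟩ := hleaf u huw
    set F : ℕ → ℕ := fun β => if h : ∃ d', H.Adj (w, β) (u, d') ∧ d' ≠ β then h.choose else 0
      with hF
    have hFspec : ∀ β ∈ H.L z₀, H.Adj (w, β) (u, F β) ∧ F β ≠ β := by
      intro β hβ
      have hex := hsigma u w hwu huuniq β hβ
      rw [hF]
      simp only [dif_pos hex]
      exact hex.choose_spec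
    have hFmem : ∀ β ∈ H.L z₀, F β ∈ H.L z₀ := by
      intro β hβ
      have := (H.adj_sub _ _ _ _ (hFspec β hβ).1).2.2
      rwa [hplain u] at this
    obtain ⟨β, hβ, heq⟩ := Finset.surj_on_of_inj_on_of_card_le
      (s := H.L z₀) (t := H.L z₀) (fun β _ => F β) (fun β hβ => hFmem β hβ)
      (fun β1 β2 h1 h2 heq => by
        have heq' : F β1 = F β2 := heq
        have ha1 := (hFspec β1 h1).1
        have ha2 := (hFspec β2 h2).1
        rw [heq'] at ha1
        exact H.matching u (F β2) w β1 β2 (H.symm _ _ ha1) (H.symm _ _ ha2))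
      (le_refl _) α hα
    have heq' : α = F β := heq
    refine ⟨β, ?_, ?_⟩
    · exact H.symm _ _ (heq' ▸ (hFspec β hβ).1)
    · intro hβα
      exact (hFspec β hβ).2 (heq'.symm.trans hβα.symm)
  have hder : ∀ u v, G.Adj u v → H.IsDerangement u v := by
    intro u v huv
    obtain ⟨hne, hor⟩ := (hstarchar u v).mp huv
    refine ⟨by rw [hplain u, hplain v], ?_⟩
    rcases hor with h | h
    · intro α hα
      rw [h] at hα ⊢
      exact hderang_from_w v (fun hv => hne (h.trans hv.symm)) α hα
    · intro α hα
      rw [h]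
      exact hderang_to_w u (fun hu => hne (hu.trans h.symm)) α hα
  -- all matchings into a fixed leaf coincide
  have hsame : ∀ α ∈ H.L z₀, ∀ y z : V, y ≠ w → z ≠ w → ∀ dy dz,
      H.Adj (w, α) (y, dy) → H.Adj (w, α) (z, dz) → dy = dz := by
    intro α hα y z hyw hzw dy dz hy hz
    by_cases hyz : y = z
    · rw [hyz] at hy
      exact H.matching _ _ _ _ _ hy hz
    by_contra hdyz
    set B : V → ℕ := fun u => if h : ∃ d', H.Adj (w, α) (u, d') ∧ d' ≠ α then h.choose else 0
      with hB
    have hBspec : ∀ u, u ≠ w → H.Adj (w, α) (u, B u) ∧ B u ≠ α := by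
      intro u huw
      obtain ⟨hwu, huuniq⟩ := hleaf u huw
      have hex := hsigma u w hwu huuniq α hα
      rw [hB]
      simp only [dif_pos hex]
      exact hex.choose_spec
    have hBy : B y = dy := H.matching _ _ _ _ _ (hBspec y hyw).1 hy
    have hBz : B z = dz := H.matching _ _ _ _ _ (hBspec z hzw).1 hz
    have hBmem : ∀ u, u ≠ w → B u ∈ (H.L z₀).erase α := by
      intro u huw
      refine Finset.mem_erase.mpr ⟨(hBspec u huw).2, ?_⟩
      have := (H.adj_sub _ _ _ _ (hBspec u huw).1).2.2
      rwa [hplain u] at this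
    set t : V → Finset ℕ := fun u => if u = w then {α} else ((H.L z₀).erase α).erase (B u)
      with ht
    have htw : t w = {α} := if_pos rfl
    have htleaf : ∀ u, u ≠ w → t u = ((H.L z₀).erase α).erase (B u) := by
      intro u huw; rw [ht]; exact if_neg huw
    have htcard : ∀ u, u ≠ w → (t u).card = k - 2 := by
      intro u huw
      rw [htleaf u huw, Finset.card_erase_of_mem (hBmem u huw),
        Finset.card_erase_of_mem hα, hH z₀]
      omega
    have hall : ∀ s : Finset V, s.card ≤ (s.biUnion t).card := by
      intro s
      by_cases hs0 : s.Nonempty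
      swap
      · rw [Finset.not_nonempty_iff_eq_empty] at hs0
        simp [hs0]
      set s' := s.erase w with hs'
      by_cases hs'0 : s'.Nonempty
      · obtain ⟨u₀, hu₀⟩ := hs'0
        have hu₀w : u₀ ≠ w := (Finset.mem_erase.mp hu₀).1
        have hu₀s : u₀ ∈ s := (Finset.mem_erase.mp hu₀).2
        have htu₀sub : t u₀ ⊆ s.biUnion t := fun x hx => Finset.mem_biUnion.mpr ⟨u₀, hu₀s, hx⟩
        have hscard : s.card ≤ s'.card + 1 := by
          rw [hs']
          by_cases hws : w ∈ s
          · rw [Finset.card_erase_of_mem hws]; omega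
          · rw [Finset.erase_eq_of_notMem hws]; omega
        by_cases hbig : s'.card ≤ k - 2
        · by_cases hws : w ∈ s
          · have hα_t : α ∈ s.biUnion t := Finset.mem_biUnion.mpr
              ⟨w, hws, by rw [htw]; exact Finset.mem_singleton_self α⟩
            have hαnot : α ∉ t u₀ := by
              rw [htleaf u₀ hu₀w]
              intro hmem
              exact (Finset.mem_erase.mp (Finset.mem_of_mem_erase hmem)).1 rfl
            have hsub2 : insert α (t u₀) ⊆ s.biUnion t :=
              Finset.insert_subset hα_t htu₀sub
            have hcard2 : (insert α (t u₀)).card = k - 1 := by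
              rw [Finset.card_insert_of_notMem hαnot, htcard u₀ hu₀w]
              omega
            have := Finset.card_le_card hsub2
            omega
          · have hseq : s'.card = s.card := by rw [hs', Finset.erase_eq_of_notMem hws]
            have h7 := Finset.card_le_card htu₀sub
            rw [htcard u₀ hu₀w] at h7
            omega
        · have hs'eq : s' = Finset.univ.erase w := by
            apply Finset.eq_of_subset_of_card_le
            · intro x hx
              exact Finset.mem_erase.mpr ⟨(Finset.mem_erase.mp hx).1, Finset.mem_univ x⟩
            · rw [Finset.card_erase_of_mem (Finset.mem_univ w), Finset.card_univ, hcard]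
              omega
          have hys : y ∈ s := by
            have : y ∈ s' := by
              rw [hs'eq]; exact Finset.mem_erase.mpr ⟨hyw, Finset.mem_univ y⟩
            exact (Finset.mem_erase.mp this).2
          have hzs : z ∈ s := by
            have : z ∈ s' := by
              rw [hs'eq]; exact Finset.mem_erase.mpr ⟨hzw, Finset.mem_univ z⟩
            exact (Finset.mem_erase.mp this).2
          have hBne : B y ≠ B z := by
            rw [hBy, hBz]; exact hdyz
          have hbigsub : (H.L z₀).erase α ⊆ s.biUnion t := by
            intro x hx
            by_cases hxy : x = B y
            · refine Finset.mem_biUnion.mpr ⟨z, hzs, ?_⟩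
              rw [htleaf z hzw]
              exact Finset.mem_erase.mpr ⟨by rw [hxy]; exact hBne, hx⟩
            · refine Finset.mem_biUnion.mpr ⟨y, hys, ?_⟩
              rw [htleaf y hyw]
              exact Finset.mem_erase.mpr ⟨hxy, hx⟩
          by_cases hws : w ∈ s
          · have hα_t : α ∈ s.biUnion t := Finset.mem_biUnion.mpr
              ⟨w, hws, by rw [htw]; exact Finset.mem_singleton_self α⟩
            have hsub2 : insert α ((H.L z₀).erase α) ⊆ s.biUnion t :=
              Finset.insert_subset hα_t hbigsub
            have hcard2 : (insert α ((H.L z₀).erase α)).card = k := by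
              rw [Finset.card_insert_of_notMem (Finset.notMem_erase α _),
                Finset.card_erase_of_mem hα, hH z₀]
              omega
            have h5 := Finset.card_le_card hsub2
            have h6 : s.card ≤ k := by
              have := Finset.card_le_univ s
              rwa [hcard] at this
            omega
          · have hseq : s' = s := by rw [hs', Finset.erase_eq_of_notMem hws]
            have h5 := Finset.card_le_card hbigsub
            rw [Finset.card_erase_of_mem hα, hH z₀] at h5
            have h6 : s.card ≤ k - 1 := by
              rw [← hseq, hs'eq, Finset.card_erase_of_mem (Finset.mem_univ w),
                Finset.card_univ, hcard]
            omega
      · have hsw : s = {w} := by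
          rw [Finset.not_nonempty_iff_eq_empty] at hs'0
          apply Finset.eq_singleton_iff_unique_mem.mpr
          obtain ⟨x, hx⟩ := hs0
          have hxw : ∀ q ∈ s, q = w := by
            intro q hq
            by_contra hqw
            exact (Finset.notMem_empty q) (hs'0 ▸ Finset.mem_erase.mpr ⟨hqw, hq⟩)
          exact ⟨(hxw x hx) ▸ hx, hxw⟩
        rw [hsw, Finset.singleton_biUnion, htw]
        simp
    obtain ⟨f, hfinj, hfmem⟩ := (Finset.all_card_le_biUnion_card_iff_exists_injective t).mp hall
    have hfw : f w = α := by
      have := hfmem w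
      rw [htw] at this
      exact Finset.mem_singleton.mp this
    have hfleaf : ∀ u, u ≠ w → f u ∈ ((H.L z₀).erase α).erase (B u) := by
      intro u huw
      have := hfmem u
      rwa [htleaf u huw] at this
    refine contra f ⟨?_, ?_⟩ ?_
    · intro v
      by_cases hvw : v = w
      · rw [hvw, hfw, hplain w]; exact hα
      · have := hfleaf v hvw
        rw [hplain v]
        exact Finset.mem_of_mem_erase (Finset.mem_of_mem_erase this)
    · intro u v
      by_cases hGuv : G.Adj u v
      swap
      · intro h; exact hGuv (H.adj_sub _ _ _ _ h).1
      obtain ⟨hne, hor⟩ := (hstarchar u v).mp hGuv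
      rcases hor with h | h
      · have hvw : v ≠ w := fun hv => hne (h.trans hv.symm)
        rw [h, hfw]
        intro hadj
        have : f v = B v := H.matching _ _ _ _ _ hadj (hBspec v hvw).1
        exact (Finset.mem_erase.mp (hfleaf v hvw)).1 this
      · have huw : u ≠ w := fun hu => hne (hu.trans h.symm)
        rw [h, hfw]
        intro hadj
        have : f u = B u := H.matching _ _ _ _ _ (H.symm _ _ hadj) (hBspec u huw).1
        exact (Finset.mem_erase.mp (hfleaf u huw)).1 this
    · rw [hm1]
      intro γ
      rw [classSize, Finset.card_le_one]
      intro a1 ha1 b1 hb1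
      simp only [Finset.mem_filter] at ha1 hb1
      exact hfinj (ha1.2.trans hb1.2.symm)
  -- assemble the conclusions
  refine ⟨⟨rfl, hiso⟩, ⟨⟨H.L z₀, hH z₀, hplain⟩, hder⟩, ?_⟩
  intro x y z hyx hzx α β
  by_cases hxw : x = w
  · have dir : ∀ y' z' : V, G.Adj y' x → G.Adj z' x →
        H.Adj (y', α) (x, β) → H.Adj (z', α) (x, β) := by
      intro y' z' hy'x hz'x hadj
      have hy'w : y' ≠ w := by
        rw [hxw] at hy'x
        exact hy'x.ne
      have hz'w : z' ≠ w := by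
        rw [hxw] at hz'x
        exact hz'x.ne
      have hβ : β ∈ H.L z₀ := by
        have := (H.adj_sub _ _ _ _ hadj).2.2
        rwa [hplain x] at this
      have hsymm := H.symm _ _ hadj
      rw [hxw] at hsymm
      obtain ⟨hwz', hz'uniq⟩ := hleaf z' hz'w
      obtain ⟨dz, hdz, -⟩ := hsigma z' w hwz' hz'uniq β hβ
      have hα_dz : α = dz := hsame β hβ y' z' hy'w hz'w α dz hsymm hdz
      rw [hα_dz, hxw]
      exact H.symm _ _ hdz
    exact ⟨dir y z hyx hzx, dir z y hzx hyx⟩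
  · have hy : y = w := by
      rcases ((hstarchar y x).mp hyx).2 with h | h
      · exact h
      · exact absurd h hxw
    have hz : z = w := by
      rcases ((hstarchar z x).mp hzx).2 with h | h
      · exact h
      · exact absurd h hxw
    rw [hy, hz]
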